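/- For the semi-discrete nonlinear string system ρA q̈ = (1/h)[D₊∇_ζ V; D₊∇_η V] with ζ = D₋u, η = D₋v, q = [u;v], D₊ = -D₋ᵀ, the semi-discrete energy H = (ρAh/2)‖q̇‖² + V, with V = h Σ_{l=1}^{M} 𝒱(ζ_l, η_l), is conserved: dH/dt = 0 along solutions. -/

import Mathlib

open Matrix

/-- Conservation of the semi-discrete energy
`H = (ρAh/2)‖q̇‖² + h Σ_l 𝒱(ζ_l, η_l)` for the semi-discrete nonlinear string
system `ρA q̈ = (1/h)[D₊∇_ζV; D₊∇_ηV]`, with `ζ = D₋u`, `η = D₋v`,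
`q = [u; v]` and `D₊ = -D₋ᵀ`, where `D₋` is the backward-difference matrix. -/
theorem stmt_16 (M : ℕ) (h ρA : ℝ) (hh : 0 < h) (hρA : 0 < ρA)
    (𝒱 Vζ Vη : ℝ → ℝ → ℝ)
    (h𝒱 : ∀ a b : ℝ, HasFDerivAt (fun z : ℝ × ℝ => 𝒱 z.1 z.2)
      (Vζ a b • ContinuousLinearMap.fst ℝ ℝ ℝ
        + Vη a b • ContinuousLinearMap.snd ℝ ℝ ℝ) (a, b))
    (Dm : Matrix (Fin M) (Fin (M - 1)) ℝ)
    (hDm : ∀ (l : Fin M) (j : Fin (M - 1)),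
      Dm l j = (if (l : ℕ) = (j : ℕ) then (1 : ℝ)
        else if (l : ℕ) = (j : ℕ) + 1 then -1 else 0) / h)
    (Dp : Matrix (Fin (M - 1)) (Fin M) ℝ) (hDp : Dp = -Dmᵀ)
    (u v u' v' u'' v'' : ℝ → Fin (M - 1) → ℝ)
    (hu : ∀ t, HasDerivAt u (u' t) t) (hu' : ∀ t, HasDerivAt u' (u'' t) t)
    (hv : ∀ t, HasDerivAt v (v' t) t) (hv' : ∀ t, HasDerivAt v' (v'' t) t)
    (hequ : ∀ t, ρA • u'' t
      = Dp.mulVec (fun l => Vζ (Dm.mulVec (u t) l) (Dm.mulVec (v t) l)))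
    (heqv : ∀ t, ρA • v'' t
      = Dp.mulVec (fun l => Vη (Dm.mulVec (u t) l) (Dm.mulVec (v t) l))) :
    ∀ t, HasDerivAt (fun s =>
      ρA * h / 2 * ((u' s ⬝ᵥ u' s) + (v' s ⬝ᵥ v' s))
        + h * ∑ l, 𝒱 (Dm.mulVec (u s) l) (Dm.mulVec (v s) l)) 0 t := by

  intro t
  classical
  -- componentwise derivatives
  have huc : ∀ i, HasDerivAt (fun s => u s i) (u' t i) t := fun i => by
    exact hasDerivAt_pi.1 (hu t) i
  have hvc : ∀ i, HasDerivAt (fun s => v s i) (v' t i) t := fun i => by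
    exact hasDerivAt_pi.1 (hv t) i
  have hu'c : ∀ i, HasDerivAt (fun s => u' s i) (u'' t i) t := fun i => by
    exact hasDerivAt_pi.1 (hu' t) i
  have hv'c : ∀ i, HasDerivAt (fun s => v' s i) (v'' t i) t := fun i => by
    exact hasDerivAt_pi.1 (hv' t) i
  -- derivatives of the strains
  have hau : ∀ l : Fin M, HasDerivAt (fun s => Dm.mulVec (u s) l)
      (Dm.mulVec (u' t) l) t := fun l => by
    have : HasDerivAt (fun s => ∑ j, Dm l j * u s j) (∑ j, Dm l j * u' t j) t :=
      HasDerivAt.fun_sum fun j _ => (huc j).const_mul _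
    simpa [Matrix.mulVec, dotProduct] using this
  have hav : ∀ l : Fin M, HasDerivAt (fun s => Dm.mulVec (v s) l)
      (Dm.mulVec (v' t) l) t := fun l => by
    have : HasDerivAt (fun s => ∑ j, Dm l j * v s j) (∑ j, Dm l j * v' t j) t :=
      HasDerivAt.fun_sum fun j _ => (hvc j).const_mul _
    simpa [Matrix.mulVec, dotProduct] using this
  -- derivative of each potential term
  set g : Fin M → ℝ := fun l => Vζ (Dm.mulVec (u t) l) (Dm.mulVec (v t) l) with hg
  set f : Fin M → ℝ := fun l => Vη (Dm.mulVec (u t) l) (Dm.mulVec (v t) l) with hf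
  have hVl : ∀ l : Fin M, HasDerivAt
      (fun s => 𝒱 (Dm.mulVec (u s) l) (Dm.mulVec (v s) l))
      (g l * Dm.mulVec (u' t) l + f l * Dm.mulVec (v' t) l) t := fun l => by
    have := (h𝒱 (Dm.mulVec (u t) l) (Dm.mulVec (v t) l)).comp_hasDerivAt t
      ((hau l).prodMk (hav l))
    simpa [hg, hf, smul_eq_mul, Function.comp_def] using this
  -- derivative of the kinetic dot products
  have hdu : HasDerivAt (fun s => u' s ⬝ᵥ u' s)
      (∑ i, (u'' t i * u' t i + u' t i * u'' t i)) t := by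
    have : HasDerivAt (fun s => ∑ i, u' s i * u' s i)
        (∑ i, (u'' t i * u' t i + u' t i * u'' t i)) t :=
      HasDerivAt.fun_sum fun i _ => (hu'c i).mul (hu'c i)
    simpa [dotProduct] using this
  have hdv : HasDerivAt (fun s => v' s ⬝ᵥ v' s)
      (∑ i, (v'' t i * v' t i + v' t i * v'' t i)) t := by
    have : HasDerivAt (fun s => ∑ i, v' s i * v' s i)
        (∑ i, (v'' t i * v' t i + v' t i * v'' t i)) t :=
      HasDerivAt.fun_sum fun i _ => (hv'c i).mul (hv'c i)
    simpa [dotProduct] using this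
  -- total derivative
  have hH : HasDerivAt (fun s =>
      ρA * h / 2 * ((u' s ⬝ᵥ u' s) + (v' s ⬝ᵥ v' s))
        + h * ∑ l, 𝒱 (Dm.mulVec (u s) l) (Dm.mulVec (v s) l))
      (ρA * h / 2 * ((∑ i, (u'' t i * u' t i + u' t i * u'' t i))
          + ∑ i, (v'' t i * v' t i + v' t i * v'' t i))
        + h * ∑ l, (g l * Dm.mulVec (u' t) l + f l * Dm.mulVec (v' t) l)) t :=
    (((hdu.add hdv).const_mul _)).add ((HasDerivAt.fun_sum fun l _ => hVl l).const_mul h)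
  -- the derivative vanishes
  have key1 : ρA * (u'' t ⬝ᵥ u' t) = -(g ⬝ᵥ Dm.mulVec (u' t)) := by
    have h1 : (ρA • u'' t) ⬝ᵥ u' t = Dp.mulVec g ⬝ᵥ u' t := by rw [hequ t]
    rw [smul_dotProduct, smul_eq_mul] at h1
    rw [h1, hDp, Matrix.neg_mulVec, neg_dotProduct, Matrix.mulVec_transpose,
      ← dotProduct_mulVec]
  have key2 : ρA * (v'' t ⬝ᵥ v' t) = -(f ⬝ᵥ Dm.mulVec (v' t)) := by
    have h1 : (ρA • v'' t) ⬝ᵥ v' t = Dp.mulVec f ⬝ᵥ v' t := by rw [heqv t]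
    rw [smul_dotProduct, smul_eq_mul] at h1
    rw [h1, hDp, Matrix.neg_mulVec, neg_dotProduct, Matrix.mulVec_transpose,
      ← dotProduct_mulVec]
  have hzero : ρA * h / 2 * ((∑ i, (u'' t i * u' t i + u' t i * u'' t i))
          + ∑ i, (v'' t i * v' t i + v' t i * v'' t i))
        + h * ∑ l, (g l * Dm.mulVec (u' t) l + f l * Dm.mulVec (v' t) l) = 0 := by
    have e1 : (∑ i, (u'' t i * u' t i + u' t i * u'' t i)) = 2 * (u'' t ⬝ᵥ u' t) := by
      rw [dotProduct, Finset.mul_sum]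
      exact Finset.sum_congr rfl fun i _ => by ring
    have e2 : (∑ i, (v'' t i * v' t i + v' t i * v'' t i)) = 2 * (v'' t ⬝ᵥ v' t) := by
      rw [dotProduct, Finset.mul_sum]
      exact Finset.sum_congr rfl fun i _ => by ring
    have e3 : (∑ l, (g l * Dm.mulVec (u' t) l + f l * Dm.mulVec (v' t) l))
        = g ⬝ᵥ Dm.mulVec (u' t) + f ⬝ᵥ Dm.mulVec (v' t) := by
      simp [dotProduct, Finset.sum_add_distrib]
    rw [e1, e2, e3]
    have := key1
    have := key2
    nlinarith [key1, key2]
  rw [← hzero]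
  exact hH
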